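/- Let A = (a_1,…,a_n) and B = (b_1,…,b_m) be integer strings with all entries a_i ≥ 2 and b_j ≥ 2. Then the pair (A, B) is complementary if and only if K(a_1,…,a_n,1,b_1,…,b_m) = 0 (equivalently, the negative continued fraction [a_1,…,a_n,1,b_1,…,b_m]^- equals 0). -/

import Mathlib

/-- The negative continuant `K(a₁,…,aₙ)`, defined by `K() = 1`, `K(a) = a`, and
`K(a₁,a₂,…,aₙ) = a₁·K(a₂,…,aₙ) − K(a₃,…,aₙ)`. -/
def negCont : List ℤ → ℤ
  | [] => 1
  | [a] => a
  | a :: b :: l => a * negCont (b :: l) - negCont l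

/-- A 2-final expansion of a pair of integer strings: it transforms
`((a₁,…,aₙ),(b₁,…,bₘ))` into either `((a₁+1,a₂,…,aₙ),(b₁,…,bₘ,2))` or
`((2,a₁,…,aₙ),(b₁,…,bₘ₋₁,bₘ+1))`. -/
def TwoFinalExp : List ℤ × List ℤ → List ℤ × List ℤ → Prop := fun P Q =>
  (∃ (a : ℤ) (A B : List ℤ), P = (a :: A, B) ∧ Q = ((a + 1) :: A, B ++ [2])) ∨
  (∃ (A B : List ℤ) (b : ℤ), P = (A, B ++ [b]) ∧ Q = (2 :: A, B ++ [b + 1]))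

/-- A pair of integer strings is complementary if it is obtained from the pair
`((2),(2))` by a finite (possibly empty) sequence of 2-final expansions. -/
def Complementary (A B : List ℤ) : Prop :=
  Relation.ReflTransGen TwoFinalExp ([2], [2]) (A, B)


def Kt (L : List ℤ) : ℤ := if L = [] then 0 else negCont L.tail
def Kd (L : List ℤ) : ℤ := if L = [] then 0 else negCont L.dropLast
def Ktd (L : List ℤ) : ℤ := if L = [] then -1 else Kd L.tail

@[simp] lemma negCont_nil : negCont [] = 1 := rfl
@[simp] lemma negCont_single (a : ℤ) : negCont [a] = a := rfl
@[simp] lemma negCont_cons_cons (a b : ℤ) (l : List ℤ) :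
    negCont (a::b::l) = a * negCont (b::l) - negCont l := rfl

@[simp] lemma Kt_nil : Kt [] = 0 := rfl
@[simp] lemma Kt_cons (a : ℤ) (L : List ℤ) : Kt (a::L) = negCont L := by simp [Kt]
@[simp] lemma Kd_nil : Kd [] = 0 := rfl
@[simp] lemma Ktd_nil : Ktd [] = -1 := rfl
@[simp] lemma Ktd_cons (a : ℤ) (L : List ℤ) : Ktd (a::L) = Kd L := by simp [Ktd]

lemma K_cons (a : ℤ) (L : List ℤ) : negCont (a::L) = a * negCont L - Kt L := by
  cases L <;> simp [Kt]

lemma Kd_cons (a : ℤ) (L : List ℤ) : Kd (a::L) = a * Kd L - Ktd L := by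
  match L with
  | [] => simp [Kd]
  | [y] => simp [Kd, Ktd]
  | y :: z :: N => simp [Kd, Ktd]

lemma Kd_snoc (L : List ℤ) (c : ℤ) : Kd (L ++ [c]) = negCont L := by
  simp [Kd]

lemma snoc_bundle (L : List ℤ) (c : ℤ) :
    negCont (L ++ [c]) = c * negCont L - Kd L ∧ Kt (L ++ [c]) = c * Kt L - Ktd L ∧
    Kd (L ++ [c]) = negCont L ∧ Ktd (L ++ [c]) = Kt L := by
  induction L with
  | nil => simp [Kt, Ktd, Kd]
  | cons a L ih =>
    obtain ⟨h1, h2, h3, h4⟩ := ih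
    refine ⟨?_, ?_, Kd_snoc _ _, ?_⟩
    · rw [List.cons_append, K_cons, h1, h2, K_cons, Kd_cons]; ring
    · rw [List.cons_append, Kt_cons, h1]; simp [Kd, Ktd]; by_cases hL : L = [] <;> simp [hL]
    · rw [List.cons_append]
      show Ktd (a :: (L ++ [c])) = _
      rw [Ktd_cons, Kd_snoc, Kt_cons]

lemma K_snoc (L : List ℤ) (c : ℤ) : negCont (L ++ [c]) = c * negCont L - Kd L :=
  (snoc_bundle L c).1
lemma Kt_snoc (L : List ℤ) (c : ℤ) : Kt (L ++ [c]) = c * Kt L - Ktd L :=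
  (snoc_bundle L c).2.1
lemma Ktd_snoc (L : List ℤ) (c : ℤ) : Ktd (L ++ [c]) = Kt L :=
  (snoc_bundle L c).2.2.2

lemma split_bundle (X Y : List ℤ) :
    negCont (X ++ Y) = negCont X * negCont Y - Kd X * Kt Y ∧
    Kt (X ++ Y) = Kt X * negCont Y - Ktd X * Kt Y := by
  induction X with
  | nil => simp
  | cons x X ih =>
    obtain ⟨h1, h2⟩ := ih
    constructor
    · rw [List.cons_append, K_cons, h1, h2, K_cons, Kd_cons]; ring
    · rw [List.cons_append, Kt_cons, h1]; simp [Kd, Ktd]; by_cases hX : X = [] <;> simp [hX]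

lemma det4 (L : List ℤ) : negCont L * Ktd L - Kd L * Kt L = -1 := by
  induction L with
  | nil => simp
  | cons a L ih =>
    rw [K_cons, Kd_cons, Kt_cons, Ktd_cons]
    linear_combination ih

lemma pos_t (L : List ℤ) (h : ∀ x ∈ L, 2 ≤ x) : 0 ≤ Kt L ∧ Kt L < negCont L := by
  induction L with
  | nil => simp
  | cons a L ih =>
    obtain ⟨h1, h2⟩ := ih (fun x hx => h x (List.mem_cons_of_mem _ hx))
    have ha : 2 ≤ a := h a List.mem_cons_self
    rw [Kt_cons, K_cons]
    constructor
    · linarith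
    · nlinarith

lemma pos_d (L : List ℤ) (h : ∀ x ∈ L, 2 ≤ x) : 0 ≤ Kd L ∧ Kd L < negCont L := by
  induction L using List.reverseRecOn with
  | nil => simp
  | append_singleton L c ih =>
    obtain ⟨h1, h2⟩ := ih (fun x hx => h x (by simp [hx]))
    have hc : 2 ≤ c := h c (by simp)
    rw [Kd_snoc, K_snoc]
    constructor
    · linarith
    · nlinarith

lemma split_K (X Y : List ℤ) :
    negCont (X ++ Y) = negCont X * negCont Y - Kd X * Kt Y :=
  (split_bundle X Y).1

def good (P : List ℤ × List ℤ) : Prop :=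
  negCont (P.1 ++ 1 :: P.2) = 0 ∧ Kt (P.1 ++ 1 :: P.2) = 1 ∧
  Kd (P.1 ++ 1 :: P.2) = 1 ∧ Ktd (P.1 ++ 1 :: P.2) = 1

lemma good_base : good ([2], [2]) := by
  refine ⟨?_, ?_, ?_, ?_⟩ <;> simp [negCont, Kt, Kd, Ktd] <;> norm_num

lemma good_step {P Q : List ℤ × List ℤ} (h : TwoFinalExp P Q) (hP : good P) : good Q := by
  rcases h with ⟨a, A, B, rfl, rfl⟩ | ⟨A, B, b, rfl, rfl⟩
  · obtain ⟨h1, h2, h3, h4⟩ := hP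
    simp only [good] at *
    have e1 : (a :: A) ++ 1 :: B = a :: (A ++ 1 :: B) := by simp
    have e2 : ((a+1) :: A) ++ 1 :: (B ++ [2]) = (a+1) :: ((A ++ 1 :: B) ++ [2]) := by simp
    rw [e1] at h1 h2 h3 h4
    rw [e2]
    set V := A ++ 1 :: B with hV
    simp only [K_cons, Kt_cons, Kd_cons, Ktd_cons, K_snoc, Kt_snoc, Kd_snoc, Ktd_snoc] at h1 h2 h3 h4 ⊢
    refine ⟨by linarith, by linarith, by linarith, by linarith⟩
  · obtain ⟨h1, h2, h3, h4⟩ := hP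
    simp only [good] at *
    have e1 : A ++ 1 :: (B ++ [b]) = (A ++ 1 :: B) ++ [b] := by simp
    have e2 : (2 :: A) ++ 1 :: (B ++ [b+1]) = 2 :: ((A ++ 1 :: B) ++ [b+1]) := by simp
    rw [e1] at h1 h2 h3 h4
    rw [e2]
    set V := A ++ 1 :: B with hV
    simp only [K_cons, Kt_cons, Kd_cons, Ktd_cons, K_snoc, Kt_snoc, Kd_snoc, Ktd_snoc] at h1 h2 h3 h4 ⊢
    refine ⟨by linarith, by linarith, by linarith, by linarith⟩

lemma comp_good' {P : List ℤ × List ℤ} (h : Relation.ReflTransGen TwoFinalExp ([2], [2]) P) :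
    good P := by
  induction h with
  | refl => exact good_base
  | tail _ hstep ih => exact good_step hstep ih

lemma comp_good {A B : List ℤ} (h : Complementary A B) : good (A, B) := comp_good' h

lemma comp_K0 {A B : List ℤ} (h : Complementary A B) : negCont (A ++ 1 :: B) = 0 :=
  (comp_good h).1

lemma comp_ne_nil' {P : List ℤ × List ℤ} (h : Relation.ReflTransGen TwoFinalExp ([2], [2]) P) :
    P.1 ≠ [] ∧ P.2 ≠ [] := by
  induction h with
  | refl => simp
  | tail _ hstep ih =>
    rcases hstep with ⟨a, A', B', _, rfl⟩ | ⟨A', B', b, _, rfl⟩ <;> simp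

lemma comp_ne_nil {A B : List ℤ} (h : Complementary A B) : A ≠ [] ∧ B ≠ [] := comp_ne_nil' h

lemma comp_entries' {P : List ℤ × List ℤ} (h : Relation.ReflTransGen TwoFinalExp ([2], [2]) P) :
    (∀ x ∈ P.1, 2 ≤ x) ∧ (∀ x ∈ P.2, 2 ≤ x) := by
  induction h with
  | refl => simp
  | tail _ hstep ih =>
    rcases hstep with ⟨a, A', B', rfl, rfl⟩ | ⟨A', B', b, rfl, rfl⟩
    · obtain ⟨ih1, ih2⟩ := ih
      have ha : 2 ≤ a := ih1 a (by simp)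
      constructor
      · intro x hx
        rcases List.mem_cons.1 hx with rfl | hx
        · linarith
        · exact ih1 x (by simp [hx])
      · intro x hx
        rcases List.mem_append.1 hx with hx | hx
        · exact ih2 x hx
        · simp at hx; omega
    · obtain ⟨ih1, ih2⟩ := ih
      have hb : 2 ≤ b := ih2 b (by simp)
      constructor
      · intro x hx
        rcases List.mem_cons.1 hx with rfl | hx
        · norm_num
        · exact ih1 x hx
      · intro x hx
        rcases List.mem_append.1 hx with hx | hx
        · exact ih2 x (by simp [hx])
        · simp at hx; omega

lemma comp_entries {A B : List ℤ} (h : Complementary A B) :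
    (∀ x ∈ A, 2 ≤ x) ∧ (∀ x ∈ B, 2 ≤ x) := comp_entries' h

/-- measure for existence induction -/
def mu (A : List ℤ) : ℕ := (A.map (fun a => (a - 2).toNat)).sum + A.length

lemma exists_partner : ∀ (n : ℕ) (A : List ℤ), mu A ≤ n → A ≠ [] → (∀ a ∈ A, 2 ≤ a) →
    ∃ B, Complementary A B := by
  intro n
  induction n with
  | zero =>
    intro A hmu hne _
    exfalso
    cases A with
    | nil => exact hne rfl
    | cons a A => simp [mu] at hmu
  | succ n ih =>
    intro A hmu hne hA
    cases A with
    | nil => exact absurd rfl hne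
    | cons a A₀ =>
      have ha : 2 ≤ a := hA a (by simp)
      by_cases h2 : a = 2
      · subst h2
        cases A₀ with
        | nil => exact ⟨[2], Relation.ReflTransGen.refl⟩
        | cons c A₁ =>
          have hmu' : mu (c :: A₁) ≤ n := by
            simp [mu] at hmu ⊢; omega
          obtain ⟨B, hB⟩ := ih (c :: A₁) hmu' (by simp)
            (fun x hx => hA x (by simp [List.mem_cons] at hx ⊢; tauto))
          obtain ⟨B₀, b, rfl⟩ := (List.eq_nil_or_concat B).resolve_left (comp_ne_nil hB).2
          refine ⟨B₀ ++ [b + 1], Relation.ReflTransGen.tail hB (Or.inr ⟨c :: A₁, B₀, b, ?_, rfl⟩)⟩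
          simp
      · have ha3 : 3 ≤ a := by omega
        have hmu' : mu ((a - 1) :: A₀) ≤ n := by
          simp [mu] at hmu ⊢; omega
        obtain ⟨B, hB⟩ := ih ((a - 1) :: A₀) hmu' (by simp)
          (by intro x hx; rcases List.mem_cons.1 hx with rfl | hx
              · omega
              · exact hA x (by simp [hx]))
        refine ⟨B ++ [2], Relation.ReflTransGen.tail hB (Or.inl ⟨a - 1, A₀, B, rfl, ?_⟩)⟩
        norm_num
  
lemma uniq : ∀ (B₁ B₂ : List ℤ), (∀ x ∈ B₁, 2 ≤ x) → (∀ x ∈ B₂, 2 ≤ x) →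
    negCont B₁ = negCont B₂ → Kt B₁ = Kt B₂ → B₁ = B₂ := by
  intro B₁
  induction B₁ with
  | nil =>
    intro B₂ _ h2 _ ht
    cases B₂ with
    | nil => rfl
    | cons b T =>
      exfalso
      rw [Kt_cons] at ht
      have := pos_t T (fun x hx => h2 x (by simp [hx]))
      simp [Kt] at ht
      omega
  | cons a T₁ ih =>
    intro B₂ h1 h2 hK ht
    cases B₂ with
    | nil =>
      exfalso
      rw [Kt_cons] at ht
      have := pos_t T₁ (fun x hx => h1 x (by simp [hx]))
      simp [Kt] at ht
      omega
    | cons b T₂ =>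
      rw [Kt_cons, Kt_cons] at ht
      rw [K_cons, K_cons, ht] at hK
      have p1 := pos_t T₁ (fun x hx => h1 x (by simp [hx]))
      have p2 := pos_t T₂ (fun x hx => h2 x (by simp [hx]))
      have hk2 : negCont T₁ = negCont T₂ := ht
      rw [← hk2] at hK p2
      have hpos : 0 < negCont T₁ := by omega
      have hab : a = b := by
        rcases lt_trichotomy a b with h | h | h
        · nlinarith
        · exact h
        · nlinarith
      subst hab
      have : Kt T₁ = Kt T₂ := by omega
      rw [ih T₂ (fun x hx => h1 x (by simp [hx])) (fun x hx => h2 x (by simp [hx])) hk2 this]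

lemma key (A B : List ℤ) (hA : ∀ x ∈ A, 2 ≤ x) (hB : ∀ x ∈ B, 2 ≤ x)
    (hF : negCont (A ++ 1 :: B) = 0) :
    negCont B = negCont A ∧ Kt B = negCont A - Kd A := by
  have e : (1 : ℤ) :: B = [1] ++ B := rfl
  have eq1 : negCont A * negCont B - negCont A * Kt B - Kd A * negCont B = 0 := by
    have := split_K A (1 :: B)
    rw [K_cons, Kt_cons] at this
    rw [this] at hF
    linarith
  have dA := det4 A
  have dB := det4 B
  have copA : IsCoprime (negCont A) (negCont A - Kd A) :=
    ⟨Kt A - Ktd A, -Kt A, by linear_combination -dA⟩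
  have copB : IsCoprime (negCont B) (Kt B) :=
    ⟨-Ktd B, Kd B, by linear_combination -dB⟩
  have pA := pos_t A hA
  have pB := pos_t B hB
  have posA : 0 < negCont A := by omega
  have posB : 0 < negCont B := by omega
  have d1 : negCont A ∣ negCont B := by
    apply copA.dvd_of_dvd_mul_left
    have : (negCont A - Kd A) * negCont B = negCont A * Kt B := by linarith
    rw [this]
    exact Dvd.intro _ rfl
  have d2 : negCont B ∣ negCont A := by
    apply copB.dvd_of_dvd_mul_left
    have : Kt B * negCont A = (negCont A - Kd A) * negCont B := by linarith
    rw [this]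
    exact dvd_mul_left _ _
  have hKK : negCont B = negCont A := Int.dvd_antisymm (le_of_lt posB) (le_of_lt posA) d2 d1
  refine ⟨hKK, ?_⟩
  have : negCont A * Kt B = negCont A * (negCont A - Kd A) := by
    rw [hKK] at eq1; ring_nf; ring_nf at eq1; linarith
  exact mul_left_cancel₀ posA.ne' this


/-- For integer strings `A = (a₁,…,aₙ)` and `B = (b₁,…,bₘ)` with all entries at
least 2, the pair `(A, B)` is complementary if and only if
`K(a₁,…,aₙ,1,b₁,…,bₘ) = 0` (equivalently, `[a₁,…,aₙ,1,b₁,…,bₘ]⁻ = 0`). -/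
theorem stmt4 (A B : List ℤ) (hA : ∀ a ∈ A, 2 ≤ a) (hB : ∀ b ∈ B, 2 ≤ b) :
    Complementary A B ↔ negCont (A ++ 1 :: B) = 0 := by
  constructor
  · exact comp_K0
  · intro h
    have hAne : A ≠ [] := by
      intro h0
      subst h0
      rw [List.nil_append, K_cons] at h
      have := pos_t B hB
      omega
    obtain ⟨B', hcomp⟩ := exists_partner (mu A) A le_rfl hAne hA
    have hB' : ∀ x ∈ B', 2 ≤ x := (comp_entries hcomp).2
    have h' : negCont (A ++ 1 :: B') = 0 := comp_K0 hcomp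
    obtain ⟨k1, t1⟩ := key A B hA hB h
    obtain ⟨k2, t2⟩ := key A B' hA hB' h'
    rw [uniq B B' hB hB' (by rw [k1, k2]) (by rw [t1, t2])]
    exact hcomp
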